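/- Let q ∈ ℂ with |q| < 1. Then Ramanujan's third order mock theta function φ satisfies φ(q) := ∑_{n=0}^∞ q^{n²} / (−q²;q²)_n = 1 + ∑_{n=1}^∞ (−1)^{n−1} q^{2n−1} · (q;q²)_{n−1}. -/

import Mathlib

/-- Finite q-Pochhammer symbol `(x;q)_n = ∏_{k=0}^{n-1} (1 - x q^k)`. -/
noncomputable def qPoch (x q : ℂ) (n : ℕ) : ℂ := ∏ k ∈ Finset.range n, (1 - x * q ^ k)

/-- Infinite q-Pochhammer symbol `(x;q)_∞ = ∏_{k=0}^{∞} (1 - x q^k)`. -/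
noncomputable def qPochInf (x q : ℂ) : ℂ := ∏' k : ℕ, (1 - x * q ^ k)

/-- Gaussian binomial coefficient `[n k]_q`, equal to `0` for `k > n`. -/
noncomputable def gbinom (q : ℂ) (n k : ℕ) : ℂ :=
  if k ≤ n then qPoch q q n / (qPoch q q k * qPoch q q (n - k)) else 0

open Finset

section Aux

lemma qPoch_ne_zero {x Q : ℂ} (hx : ‖x‖ < 1) (hQ : ‖Q‖ ≤ 1) (n : ℕ) : qPoch x Q n ≠ 0 := by
  refine Finset.prod_ne_zero_iff.2 fun k _ => ?_
  intro h
  have h1 : x * Q ^ k = 1 := by linear_combination -h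
  have : ‖x * Q ^ k‖ < 1 := by
    calc ‖x * Q ^ k‖ = ‖x‖ * ‖Q‖^k := by simp [norm_mul, norm_pow]
    _ ≤ ‖x‖ * 1 := by
        refine mul_le_mul_of_nonneg_left ?_ (norm_nonneg _)
        exact pow_le_one₀ (norm_nonneg _) hQ
    _ < 1 := by simpa using hx
  rw [h1] at this; simp at this

-- geometric sum bound
lemma geom_sum_le_inv {c : ℝ} (h0 : 0 ≤ c) (h : c < 1) (n : ℕ) :
    ∑ k ∈ range n, c ^ k ≤ (1 - c)⁻¹ := by
  have h1 : 0 < 1 - c := by linarith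
  rw [geom_sum_eq (by intro hc; rw [hc] at h; linarith : c ≠ 1)]
  have h0n : 0 ≤ c ^ n := pow_nonneg h0 n
  have h1n : c ^ n ≤ 1 := pow_le_one₀ h0 h.le
  rw [div_le_iff_of_neg (by linarith : c - 1 < 0)]
  have : (1 - c)⁻¹ * (1 - c) = 1 := inv_mul_cancel₀ (by linarith)
  nlinarith

lemma qPoch_norm_le {x Q : ℂ} {s : ℝ} (hs : s < 1) (hx : ‖x‖ ≤ s) (hQ : ‖Q‖ ≤ s) (n : ℕ) :
    ‖qPoch x Q n‖ ≤ Real.exp (s / (1 - s)) := by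
  have hs0 : 0 ≤ s := le_trans (norm_nonneg x) hx
  calc ‖qPoch x Q n‖ ≤ ∏ k ∈ range n, ‖1 - x * Q ^ k‖ := norm_prod_le _ _
    _ ≤ ∏ k ∈ range n, Real.exp (s * s ^ k) := by
        refine Finset.prod_le_prod (fun k _ => norm_nonneg _) fun k _ => ?_
        calc ‖1 - x * Q ^ k‖ ≤ ‖(1:ℂ)‖ + ‖x * Q ^ k‖ := norm_sub_le _ _
          _ ≤ 1 + s * s ^ k := by
              simp only [norm_one, norm_mul, norm_pow]
              have : ‖x‖ * ‖Q‖ ^ k ≤ s * s ^ k :=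
                mul_le_mul hx (pow_le_pow_left₀ (norm_nonneg _) hQ k) (by positivity) hs0
              linarith
          _ ≤ Real.exp (s * s ^ k) := by
              have := Real.add_one_le_exp (s * s ^ k); linarith
    _ = Real.exp (∑ k ∈ range n, s * s ^ k) := (Real.exp_sum _ _).symm
    _ ≤ Real.exp (s / (1 - s)) := by
        refine Real.exp_le_exp.2 ?_
        rw [← Finset.mul_sum, div_eq_mul_inv]
        exact mul_le_mul_of_nonneg_left (geom_sum_le_inv hs0 hs n) hs0

lemma one_sub_ge_exp {t s : ℝ} (ht0 : 0 ≤ t) (hts : t ≤ s) (hs : s < 1) :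
    Real.exp (-(t / (1 - s))) ≤ 1 - t := by
  have h1 : 0 < 1 - t := by linarith
  have h2 : 0 < 1 - s := by linarith
  have key : 1 / (1 - t) ≤ Real.exp (t / (1 - s)) := by
    calc 1 / (1 - t) = 1 + t / (1 - t) := by field_simp; ring
      _ ≤ 1 + t / (1 - s) := by
          have : t / (1 - t) ≤ t / (1 - s) := by
            apply div_le_div_of_nonneg_left ht0 h2; linarith
          linarith
      _ ≤ Real.exp (t / (1 - s)) := by have := Real.add_one_le_exp (t / (1-s)); linarith
  rw [Real.exp_neg]
  rw [inv_le_comm₀ (Real.exp_pos _) h1] at *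
  calc (1 - t)⁻¹ = 1 / (1 - t) := (one_div _).symm
    _ ≤ Real.exp (t / (1 - s)) := key

lemma qPoch_norm_ge {x Q : ℂ} {s : ℝ} (hs : s < 1) (hx : ‖x‖ ≤ s) (hQ : ‖Q‖ ≤ s) (n : ℕ) :
    Real.exp (-(s / ((1 - s) * (1 - s)))) ≤ ‖qPoch x Q n‖ := by
  have hs0 : 0 ≤ s := le_trans (norm_nonneg x) hx
  have h2 : 0 < 1 - s := by linarith
  calc Real.exp (-(s / ((1 - s) * (1 - s))))
      ≤ Real.exp (∑ k ∈ range n, -(s * s ^ k / (1 - s))) := by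
        refine Real.exp_le_exp.2 ?_
        rw [show (∑ k ∈ range n, -(s * s ^ k / (1 - s))) = -(∑ k ∈ range n, s * s ^ k / (1 - s)) by
          simp]
        refine neg_le_neg ?_
        have hgeom := geom_sum_le_inv hs0 hs n
        calc ∑ k ∈ range n, s * s ^ k / (1 - s)
            = (∑ k ∈ range n, s ^ k) * (s / (1 - s)) := by
              rw [Finset.sum_mul]; refine Finset.sum_congr rfl fun k _ => by ring
          _ ≤ (1 - s)⁻¹ * (s / (1 - s)) := by
              refine mul_le_mul_of_nonneg_right hgeom (by positivity)
          _ = s / ((1 - s) * (1 - s)) := by field_simp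
    _ = ∏ k ∈ range n, Real.exp (-(s * s ^ k / (1 - s))) := Real.exp_sum _ _
    _ ≤ ∏ k ∈ range n, ‖1 - x * Q ^ k‖ := by
        refine Finset.prod_le_prod (fun k _ => (Real.exp_pos _).le) fun k _ => ?_
        have hxq : ‖x * Q ^ k‖ ≤ s * s ^ k := by
          simp only [norm_mul, norm_pow]
          exact mul_le_mul hx (pow_le_pow_left₀ (norm_nonneg _) hQ k) (by positivity) hs0
        have hss : s * s ^ k ≤ s := by
          calc s * s ^ k ≤ s * 1 := mul_le_mul_of_nonneg_left (pow_le_one₀ hs0 hs.le) hs0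
            _ = s := mul_one s
        calc Real.exp (-(s * s ^ k / (1 - s))) ≤ 1 - s * s ^ k := by
              refine one_sub_ge_exp (by positivity) hss hs
          _ ≤ 1 - ‖x * Q ^ k‖ := by linarith
          _ ≤ ‖1 - x * Q ^ k‖ := by
              have := norm_sub_norm_le (1:ℂ) (x * Q ^ k); simpa using this
    _ ≤ ‖qPoch x Q n‖ := by rw [qPoch, norm_prod]

lemma qPoch_zero (x Q : ℂ) : qPoch x Q 0 = 1 := by simp [qPoch]

lemma qPoch_succ (x Q : ℂ) (n : ℕ) : qPoch x Q (n+1) = qPoch x Q n * (1 - x * Q ^ n) := by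
  simp [qPoch, Finset.prod_range_succ]

lemma qPoch_succ' (x Q : ℂ) (n : ℕ) : qPoch x Q (n+1) = (1 - x) * qPoch (x * Q) Q n := by
  rw [qPoch, Finset.prod_range_succ']
  have : ∀ k ∈ Finset.range n, 1 - x * Q ^ (k+1) = 1 - (x*Q) * Q ^ k := by
    intro k _; rw [mul_assoc, ← pow_succ']
  rw [Finset.prod_congr rfl this]
  simp [qPoch, mul_comm]

section
variable {r : ℂ} (hr : ∀ j, qPoch r r j ≠ 0)
include hr

lemma gbinom_zero (n : ℕ) : gbinom r n 0 = 1 := by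
  simp [gbinom, qPoch_zero, hr n]

lemma gbinom_self (n : ℕ) : gbinom r n n = 1 := by
  simp [gbinom, qPoch_zero, hr n]

lemma gbinom_of_gt {n k : ℕ} (h : n < k) : gbinom r n k = 0 := by
  simp [gbinom, Nat.not_le.2 h]

lemma gbinom_pascal (n k : ℕ) :
    gbinom r (n+1) (k+1) = r^(k+1) * gbinom r n (k+1) + gbinom r n k := by
  rcases lt_trichotomy n k with h | rfl | h
  · rw [gbinom_of_gt hr (by omega), gbinom_of_gt hr (by omega), gbinom_of_gt hr (by omega)]
    ring
  · rw [gbinom_self hr, gbinom_self hr, gbinom_of_gt hr (by omega)]; ring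
  · -- k < n, so k+1 ≤ n
    have hk1 : k + 1 ≤ n := h
    rw [gbinom, gbinom, gbinom, if_pos (by omega), if_pos hk1, if_pos (by omega)]
    have e1 : n + 1 - (k+1) = n - k := by omega
    have e2 : n - k = (n - (k+1)) + 1 := by omega
    rw [e1, e2, qPoch_succ r r (n - (k+1)), qPoch_succ r r n, qPoch_succ r r k]
    have hp1 : r ^ (k+1) * r ^ (n - (k+1) + 1) = r ^ (n + 1) := by
      rw [← pow_add]; congr 1; omega
    have h1 := hr n; have h2 := hr k; have h3 := hr (n - (k+1))
    have f1 : (1 : ℂ) - r * r ^ n ≠ 0 := by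
      have := hr (n+1); rw [qPoch_succ] at this
      exact right_ne_zero_of_mul this
    have f2 : (1 : ℂ) - r * r ^ k ≠ 0 := by
      have := hr (k+1); rw [qPoch_succ] at this
      exact right_ne_zero_of_mul this
    have f3 : (1 : ℂ) - r * r ^ (n - (k+1)) ≠ 0 := by
      have := hr (n - (k+1) + 1); rw [qPoch_succ] at this
      exact right_ne_zero_of_mul this
    have hrn : r * r ^ n = r ^ (k+1) * r ^ (n - (k+1) + 1) := by
      rw [← pow_succ' r n, ← hp1]
    have hrk : r * r ^ k = r ^ (k+1) := (pow_succ' r k).symm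
    have hrd : r * r ^ (n - (k+1)) = r ^ (n - (k+1) + 1) := (pow_succ' r _).symm
    rw [hrn] at f1; rw [hrk] at f2; rw [hrd] at f3
    rw [hrn, hrk, hrd]
    generalize qPoch r r n = a at h1 ⊢
    generalize qPoch r r k = b at h2 ⊢
    generalize qPoch r r (n - (k+1)) = d at h3 ⊢
    generalize r ^ (k+1) = u at f1 f2 ⊢
    generalize r ^ (n - (k+1) + 1) = v at f1 f3 ⊢
    field_simp
    ring
end

lemma pow_step (q : ℂ) (k : ℕ) : q ^ ((k+1)*k) = q ^ (k*(k-1)) * (q^2) ^ k := by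
  rw [← pow_mul, ← pow_add]
  congr 1
  cases k with
  | zero => simp
  | succ m => simp only [Nat.add_sub_cancel]; ring

lemma qbinom_thm (q : ℂ) (hr : ∀ j, qPoch (q^2) (q^2) j ≠ 0) (n : ℕ) :
    ∀ x : ℂ, qPoch x (q^2) n
      = ∑ k ∈ range (n+1), (-1)^k * q^(k*(k-1)) * x^k * gbinom (q^2) n k := by
  induction n with
  | zero => intro x; simp [qPoch_zero, gbinom_zero hr]
  | succ n IH =>
    intro x
    set r : ℂ := q^2 with hrdef
    set S := ∑ k ∈ range (n+1), (-1)^k * q^(k*(k-1)) * r^k * x^k * gbinom r n k with hS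
    have hg : ∀ k, ((-1:ℂ))^(k+1) * q^((k+1)*((k+1)-1)) * x^(k+1) * gbinom r n k
        = -x * ((-1)^k * q^(k*(k-1)) * r^k * x^k * gbinom r n k) := by
      intro k
      simp only [Nat.add_sub_cancel]
      rw [pow_step q k]
      ring
    have hLHS : qPoch x r (n+1) = S - x * S := by
      rw [qPoch_succ', IH (x*r)]
      have hc : ∀ k ∈ range (n+1), (-1:ℂ)^k * q^(k*(k-1)) * (x*r)^k * gbinom r n k
          = (-1:ℂ)^k * q^(k*(k-1)) * r^k * x^k * gbinom r n k := by
        intro k _; rw [mul_pow]; ring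
      rw [Finset.sum_congr rfl hc, ← hS]
      ring
    rw [hLHS]
    -- now the RHS
    rw [Finset.sum_range_succ']
    have hpas : ∀ k ∈ range (n+1),
        (-1:ℂ)^(k+1) * q^((k+1)*((k+1)-1)) * x^(k+1) * gbinom r (n+1) (k+1)
        = ((-1:ℂ)^(k+1) * q^((k+1)*k) * r^(k+1) * x^(k+1) * gbinom r n (k+1))
          + (-x * ((-1)^k * q^(k*(k-1)) * r^k * x^k * gbinom r n k)) := by
      intro k _
      rw [gbinom_pascal hr n k, ← hg k]
      simp only [Nat.add_sub_cancel]
      ring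
    rw [Finset.sum_congr rfl hpas, Finset.sum_add_distrib]
    have hfirst : ∑ k ∈ range (n+1),
        (-1:ℂ)^(k+1) * q^((k+1)*k) * r^(k+1) * x^(k+1) * gbinom r n (k+1) = S - 1 := by
      have expand := Finset.sum_range_succ'
        (fun k => (-1:ℂ)^k * q^(k*(k-1)) * r^k * x^k * gbinom r n k) (n+1)
      -- ∑_{range(n+2)} g = ∑_{range(n+1)} g(k+1) + g 0
      have htop : ∑ k ∈ range (n+2), (-1:ℂ)^k * q^(k*(k-1)) * r^k * x^k * gbinom r n k
          = S := by
        rw [Finset.sum_range_succ, gbinom_of_gt hr (by omega)]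
        simp [hS]
      have hzero : ((-1:ℂ))^0 * q^(0*(0-1)) * r^0 * x^0 * gbinom r n 0 = 1 := by
        simp [gbinom_zero hr]
      simp only [Nat.add_sub_cancel] at expand ⊢
      rw [htop] at expand
      rw [hzero] at expand
      linear_combination -expand
    rw [hfirst, ← Finset.mul_sum]
    have hzero2 : ((-1:ℂ))^0 * q^(0*(0-1)) * x^0 * gbinom r (n+1) 0 = 1 := by
      simp [gbinom_zero hr]
    rw [hzero2, ← hS]
    ring

section MainQ
variable {q : ℂ} (hq : ‖q‖ < 1)
include hq

lemma hq2le : ‖q^2‖ ≤ ‖q‖ := by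
  rw [norm_pow]; nlinarith [norm_nonneg q]

lemma hr_ne (j : ℕ) : qPoch (q^2) (q^2) j ≠ 0 := by
  refine qPoch_ne_zero ?_ ?_ j
  · rw [norm_pow]; nlinarith [norm_nonneg q]
  · rw [norm_pow]; nlinarith [norm_nonneg q]

lemma gbinom_bound (n k : ℕ) :
    ‖gbinom (q^2) n k‖ ≤ Real.exp (‖q‖/(1-‖q‖))
      / (Real.exp (-(‖q‖/((1-‖q‖)*(1-‖q‖)))) * Real.exp (-(‖q‖/((1-‖q‖)*(1-‖q‖))))) := by
  have hx : ‖(q^2 : ℂ)‖ ≤ ‖q‖ := hq2le hq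
  by_cases h : k ≤ n
  · rw [gbinom, if_pos h, norm_div, norm_mul]
    refine div_le_div₀ (Real.exp_nonneg _) (qPoch_norm_le hq hx hx n) (by positivity) ?_
    exact mul_le_mul (qPoch_norm_ge hq hx hx k) (qPoch_norm_ge hq hx hx (n-k))
      (Real.exp_nonneg _) (norm_nonneg _)
  · rw [gbinom, if_neg h]
    simp only [norm_zero]
    positivity

lemma gbinom_summable (f : ℕ → ℕ) (j : ℕ) {w : ℂ} (hw : ‖w‖ < 1) :
    Summable (fun m => gbinom (q^2) (f m) j * w^m) := by
  set C := Real.exp (‖q‖/(1-‖q‖))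
      / (Real.exp (-(‖q‖/((1-‖q‖)*(1-‖q‖)))) * Real.exp (-(‖q‖/((1-‖q‖)*(1-‖q‖)))))
  refine Summable.of_norm_bounded (g := fun m => C * ‖w‖^m)
    ((summable_geometric_of_lt_one (norm_nonneg w) hw).mul_left C) fun m => ?_
  rw [norm_mul, norm_pow]
  exact mul_le_mul_of_nonneg_right (gbinom_bound hq _ _) (by positivity)

lemma gbinom_geom (k : ℕ) {w : ℂ} (hw : ‖w‖ < 1) :
    ∑' m : ℕ, gbinom (q^2) (m+k) k * w^m = (qPoch w (q^2) (k+1))⁻¹ := by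
  have hr := hr_ne hq
  have hq2 : ‖(q^2 : ℂ)‖ ≤ 1 := le_trans (hq2le hq) hq.le
  induction k with
  | zero =>
    have h1 : ∀ m : ℕ, gbinom (q^2) (m+0) 0 * w^m = w^m := by
      intro m; rw [gbinom_zero hr, one_mul]
    rw [tsum_congr h1, tsum_geometric_of_norm_lt_one hw]
    congr 1
    simp [qPoch]
  | succ k IH =>
    have hfac : (1 : ℂ) - w * (q^2)^(k+1) ≠ 0 := by
      intro h
      have h1 : w * (q^2)^(k+1) = 1 := by linear_combination -h
      have hlt : ‖w * (q^2)^(k+1)‖ < 1 := by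
        rw [norm_mul, norm_pow]
        have h2 : ‖(q^2:ℂ)‖^(k+1) ≤ 1 := pow_le_one₀ (norm_nonneg _) hq2
        calc ‖w‖ * ‖(q^2:ℂ)‖^(k+1) ≤ ‖w‖ * 1 :=
              mul_le_mul_of_nonneg_left h2 (norm_nonneg _)
          _ = ‖w‖ := mul_one _
          _ < 1 := hw
      rw [h1] at hlt; simp at hlt
    set P := qPoch w (q^2) (k+1) with hP
    have hPne : P ≠ 0 := qPoch_ne_zero hw hq2 (k+1)
    set A := ∑' m : ℕ, gbinom (q^2) (m+(k+1)) (k+1) * w^m with hA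
    have hs2 : Summable (fun m => gbinom (q^2) (m+k) (k+1) * w^m) :=
      gbinom_summable hq (fun m => m+k) (k+1) hw
    have hs3 : Summable (fun m => gbinom (q^2) (m+k) k * w^m) :=
      gbinom_summable hq (fun m => m+k) k hw
    have hs1 : Summable (fun m => (q^2:ℂ)^(k+1) * (gbinom (q^2) (m+k) (k+1) * w^m)) :=
      hs2.mul_left _
    have hpas : ∀ m : ℕ, gbinom (q^2) (m+(k+1)) (k+1) * w^m
        = (q^2)^(k+1) * (gbinom (q^2) (m+k) (k+1) * w^m) + gbinom (q^2) (m+k) k * w^m := by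
      intro m
      have hm : m + (k+1) = (m+k) + 1 := by omega
      rw [hm, gbinom_pascal hr (m+k) k]
      ring
    have step1 : A = (q^2)^(k+1) * (∑' m : ℕ, gbinom (q^2) (m+k) (k+1) * w^m) + P⁻¹ := by
      rw [hA, tsum_congr hpas, hs1.tsum_add hs3, tsum_mul_left, IH]
    have step2 : (∑' m : ℕ, gbinom (q^2) (m+k) (k+1) * w^m) = w * A := by
      rw [hs2.tsum_eq_zero_add]
      have h0 : gbinom (q^2) (0+k) (k+1) * w^0 = 0 := by
        rw [gbinom_of_gt hr (by omega)]; ring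
      rw [h0, zero_add]
      have hcong : ∀ m : ℕ, gbinom (q^2) ((m+1)+k) (k+1) * w^(m+1)
          = w * (gbinom (q^2) (m+(k+1)) (k+1) * w^m) := by
        intro m
        have : (m+1)+k = m+(k+1) := by omega
        rw [this]; ring
      rw [tsum_congr hcong, tsum_mul_left]
    rw [step2] at step1
    -- A = r^{k+1} w A + P⁻¹  ⇒  A = (P * (1 - w r^{k+1}))⁻¹
    rw [qPoch_succ, ← hP, mul_inv]
    rw [eq_mul_inv_iff_mul_eq₀ hfac]
    linear_combination step1
end MainQ

theorem stmt9 (q : ℂ) (hq : ‖q‖ < 1) :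
    ∑' n : ℕ, q ^ (n ^ 2) / qPoch (-q ^ 2) (q ^ 2) n
      = 1 + ∑' n : ℕ, (-1 : ℂ) ^ n * q ^ (2 * n + 1) * qPoch q (q ^ 2) n := by
  have hq0 : (0:ℝ) ≤ ‖q‖ := norm_nonneg q
  have hq1 : ‖q‖ ≤ 1 := hq.le
  have hx2 : ‖(q^2 : ℂ)‖ ≤ ‖q‖ := hq2le hq
  have hw2 : ‖(-q^2 : ℂ)‖ ≤ ‖q‖ := by rw [norm_neg]; exact hx2
  have hwlt : ‖(-q^2 : ℂ)‖ < 1 := lt_of_le_of_lt hw2 hq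
  have hr := hr_ne hq
  set eps := Real.exp (-(‖q‖/((1-‖q‖)*(1-‖q‖)))) with heps
  set E := Real.exp (‖q‖/(1-‖q‖)) with hE
  set C := E / (eps * eps) with hC
  have hepspos : 0 < eps := Real.exp_pos _
  have hCpos : 0 < C := by positivity
  set a : ℕ → ℂ := fun n => q ^ (n ^ 2) / qPoch (-q ^ 2) (q ^ 2) n with ha
  -- summability of a
  have hsa : Summable a := by
    refine Summable.of_norm_bounded (g := fun n => eps⁻¹ * ‖q‖^n)
      ((summable_geometric_of_lt_one hq0 hq).mul_left _) fun n => ?_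
    rw [ha]
    simp only [norm_div, norm_pow]
    have h1 : ‖q‖ ^ (n^2) ≤ ‖q‖ ^ n :=
      pow_le_pow_of_le_one hq0 hq1 (Nat.le_self_pow two_ne_zero n)
    have h2 : eps ≤ ‖qPoch (-q^2) (q^2) n‖ := qPoch_norm_ge hq hw2 hx2 n
    calc ‖q‖^(n^2) / ‖qPoch (-q^2) (q^2) n‖ ≤ ‖q‖^n / eps := by
          exact div_le_div₀ (by positivity) h1 hepspos h2
      _ = eps⁻¹ * ‖q‖^n := by rw [div_eq_mul_inv]; ring
  have ha0 : a 0 = 1 := by simp [ha, qPoch]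
  -- the double family
  set t : ℕ → ℕ → ℂ := fun n k => (-1)^(n+k) * q^(2*n+1+k^2) * gbinom (q^2) n k with ht
  have hT : Summable (Function.uncurry t) := by
    have hbnd : Summable (fun p : ℕ × ℕ => (C * ‖q‖^p.1) * ‖q‖^p.2) := by
      refine Summable.mul_of_nonneg
        (((summable_geometric_of_lt_one hq0 hq).mul_left C)) (summable_geometric_of_lt_one hq0 hq)
        (fun n => by positivity) (fun k => by positivity)
    refine Summable.of_norm_bounded hbnd fun p => ?_
    obtain ⟨n, k⟩ := p
    simp only [Function.uncurry, ht]
    rw [norm_mul, norm_mul, norm_pow, norm_pow, norm_neg, norm_one, one_pow, one_mul]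
    have he : n + k ≤ 2*n+1+k^2 := by
      have := Nat.le_self_pow two_ne_zero k; omega
    have h1 : ‖q‖^(2*n+1+k^2) ≤ ‖q‖^(n+k) := pow_le_pow_of_le_one hq0 hq1 he
    calc ‖q‖^(2*n+1+k^2) * ‖gbinom (q^2) n k‖ ≤ ‖q‖^(n+k) * C :=
          mul_le_mul h1 (gbinom_bound hq n k) (norm_nonneg _) (by positivity)
      _ = C * ‖q‖^n * ‖q‖^k := by rw [pow_add]; ring
  -- row n: R n = ∑' k, t n k
  have hrow : ∀ n : ℕ, (-1 : ℂ) ^ n * q ^ (2 * n + 1) * qPoch q (q ^ 2) n = ∑' k, t n k := by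
    intro n
    have hfin : ∑' k, t n k = ∑ k ∈ range (n+1), t n k := by
      refine tsum_eq_sum fun k hk => ?_
      have : n < k := by simpa using hk
      simp [ht, gbinom_of_gt hr this]
    rw [hfin, qbinom_thm q hr n q, Finset.mul_sum]
    refine Finset.sum_congr rfl fun k _ => ?_
    simp only [ht]
    have hk2 : q^(2*n+1+k^2) = q^(2*n+1) * q^(k*(k-1)) * q^k := by
      rw [← pow_add, ← pow_add]
      congr 1
      cases k with
      | zero => ring
      | succ m => simp only [Nat.add_sub_cancel]; ring
    rw [hk2, pow_add]
    ring
  -- column k: ∑' n, t n k = a (k+1)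
  have hcol : ∀ k : ℕ, (∑' n, t n k) = a (k+1) := by
    intro k
    have hinj : Function.Injective (fun m : ℕ => m + k) := add_left_injective k
    have hsupp : Function.support (fun n => t n k) ⊆ Set.range (fun m : ℕ => m + k) := by
      intro n hn
      rcases le_or_gt k n with h | h
      · exact ⟨n - k, show n - k + k = n from by omega⟩
      · exfalso; apply hn; simp [ht, gbinom_of_gt hr h]
    rw [← hinj.tsum_eq hsupp]
    have hpt : ∀ m : ℕ, t (m+k) k = q^((k+1)^2) * (gbinom (q^2) (m+k) k * (-q^2)^m) := by
      intro m
      have h1 : ((-1:ℂ))^(m+k+k) = (-1)^m * ((-1)^k)^2 := by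
        rw [← pow_mul, ← pow_add]; congr 1; ring
      have h2 : q^(2*(m+k)+1+k^2) = (q^2)^m * q^((k+1)^2) := by
        rw [← pow_mul, ← pow_add]
        congr 1
        ring
      have h3 : ((-q^2 : ℂ))^m = (-1)^m * (q^2)^m := by
        rw [neg_pow]
      have h4 : (((-1:ℂ))^k)^2 = 1 := by
        rw [← pow_mul, mul_comm, pow_mul]; simp
      simp only [ht]
      rw [h1, h2, h3, h4]
      ring
    rw [tsum_congr hpt, tsum_mul_left, gbinom_geom hq k hwlt]
    simp only [ha]
    rw [div_eq_mul_inv]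
  calc ∑' n : ℕ, q ^ (n ^ 2) / qPoch (-q ^ 2) (q ^ 2) n
      = a 0 + ∑' k, a (k+1) := hsa.tsum_eq_zero_add
    _ = 1 + ∑' k, (∑' n, t n k) := by rw [ha0, tsum_congr fun k => (hcol k).symm]
    _ = 1 + ∑' n, (∑' k, t n k) := by rw [hT.tsum_comm]
    _ = 1 + ∑' n : ℕ, (-1 : ℂ) ^ n * q ^ (2 * n + 1) * qPoch q (q ^ 2) n := by
        rw [tsum_congr fun n => (hrow n).symm]

end Aux
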